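/- arXiv:1607.08504 — 2 statements merged into one kernel-verified Lean document; each statement's English description precedes it below -/
import Mathlib

section
/- Let Γ be a finite-dimensional k-algebra such that the injective envelope of every projective Γ-module is projective (dominant dimension at least 1 formulation). If X is a Γ-module of projective dimension at most 1, then X embeds into a projective-injective Γ-module; in particular X is torsionless. -/
/-- A module has projective dimension at most 1 if it admits a projective
resolution `0 → P₁ → P₀ → M → 0`. -/
def pdLE1 (R : Type) [Ring R] (M : Type) [AddCommGroup M] [Module R M] : Prop :=
  ∃ (P₁ P₀ : ModuleCat.{0} R) (i : P₁ →ₗ[R] P₀) (p : P₀ →ₗ[R] M),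
    Module.Projective R P₁ ∧ Module.Projective R P₀ ∧
    Function.Injective i ∧ Function.Exact i p ∧ Function.Surjective p

/-- An injective map `f : X → I` is an essential embedding if every nonzero
submodule of `I` meets the image of `f` nontrivially. -/
def IsEssentialEmbedding (R : Type) [Ring R] {X I : Type}
    [AddCommGroup X] [Module R X] [AddCommGroup I] [Module R I] (f : X →ₗ[R] I) : Prop :=
  Function.Injective f ∧
    ∀ S : Submodule R I, S ⊓ LinearMap.range f = ⊥ → S = ⊥

/-- A product of two injective modules is injective. -/
lemma injective_prod_aux (R : Type) [Ring R] (A B : Type) [AddCommGroup A] [Module R A]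
    [AddCommGroup B] [Module R B] (hA : Module.Injective R A) (hB : Module.Injective R B) :
    Module.Injective R (A × B) := by
  constructor
  intro X Y _ _ _ _ f hf g
  obtain ⟨h₁, hh₁⟩ := hA.out f hf ((LinearMap.fst R A B) ∘ₗ g)
  obtain ⟨h₂, hh₂⟩ := hB.out f hf ((LinearMap.snd R A B) ∘ₗ g)
  exact ⟨LinearMap.prod h₁ h₂, fun x => by
    simpa [Prod.ext_iff] using ⟨hh₁ x, hh₂ x⟩⟩

/-- Let `Γ` be a finite-dimensional algebra such that for every projective
module `P`, the injective envelope `I(P)` is projective (and injective), and the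
cokernel of `P → I(P)` embeds into a projective-injective module. Then every module of
projective dimension at most 1 embeds into a projective-injective module; in particular
it is torsionless. -/
theorem stmt_6 (k : Type) [Field k] (Γ : Type) [Ring Γ] [Algebra k Γ]
    [FiniteDimensional k Γ]
    (hdom : ∀ (P : ModuleCat.{0} Γ), Module.Projective Γ P →
      ∃ (I : ModuleCat.{0} Γ) (f : P →ₗ[Γ] I),
        IsEssentialEmbedding Γ f ∧ Module.Injective Γ I ∧ Module.Projective Γ I ∧
        ∃ (J : ModuleCat.{0} Γ) (g : (I ⧸ LinearMap.range f) →ₗ[Γ] J),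
          Module.Injective Γ J ∧ Module.Projective Γ J ∧ Function.Injective g)
    (X : Type) [AddCommGroup X] [Module Γ X] (hX : pdLE1 Γ X) :
    (∃ (I : ModuleCat.{0} Γ) (f : X →ₗ[Γ] I),
        Module.Injective Γ I ∧ Module.Projective Γ I ∧ Function.Injective f) ∧
      ∃ (P : ModuleCat.{0} Γ) (f : X →ₗ[Γ] P),
        Module.Projective Γ P ∧ Function.Injective f := by
  obtain ⟨P₁, P₀, i, p, hP₁, hP₀, hi, hexact, hp⟩ := hX
  obtain ⟨I₁, f₁, ⟨hf₁inj, hf₁ess⟩, hI₁inj, hI₁proj, J, g, hJinj, hJproj, hginj⟩ := hdom P₁ hP₁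
  obtain ⟨I₀, f₀, ⟨hf₀inj, -⟩, hI₀inj, hI₀proj, -⟩ := hdom P₀ hP₀
  -- extend `f₀ ∘ i : P₁ → I₀` along the essential embedding `f₁ : P₁ → I₁`
  obtain ⟨h, hh⟩ := hI₀inj.out f₁ hf₁inj (f₀ ∘ₗ i)
  -- `h` is injective by essentiality
  have hhinj : Function.Injective h := by
    rw [← LinearMap.ker_eq_bot]
    apply hf₁ess
    rw [eq_bot_iff]
    rintro x ⟨hxk, y, rfl⟩
    have : f₀ (i y) = 0 := by
      have := hh y
      simp only [LinearMap.comp_apply] at this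
      rw [← this]
      exact hxk
    have : i y = 0 := hf₀inj (by simpa using this)
    have : y = 0 := hi (by simpa using this)
    simp [this]
  -- the cokernel `C` of `h` and its projection
  set C := (I₀ : Type) ⧸ LinearMap.range h with hC
  let q : I₀ →ₗ[Γ] C := (LinearMap.range h).mkQ
  -- splitting of `q` coming from a retraction of `h` (as `I₁` is injective)
  obtain ⟨r, hr⟩ := hI₁inj.out h hhinj LinearMap.id
  let σ : I₀ →ₗ[Γ] I₀ := LinearMap.id - h ∘ₗ r
  have hσ : LinearMap.range h ≤ LinearMap.ker σ := by
    rintro - ⟨z, rfl⟩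
    simp [σ, hr z]
  let s : C →ₗ[Γ] I₀ := (LinearMap.range h).liftQ σ hσ
  have hqs : q ∘ₗ s = LinearMap.id := by
    ext y
    show q (s (Submodule.Quotient.mk y)) = Submodule.Quotient.mk y
    rw [show s (Submodule.Quotient.mk y) = σ y from rfl]
    simp only [σ, LinearMap.sub_apply, LinearMap.id_apply, LinearMap.comp_apply, map_sub, q]
    have : (LinearMap.range h).mkQ (h (r y)) = 0 := by
      simp [Submodule.mkQ_apply, Submodule.Quotient.mk_eq_zero]
    rw [this, sub_zero]
    rfl
  -- `C` is projective and injective, being a direct summand of `I₀`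
  have hCproj : Module.Projective Γ C := by
    have := hI₀proj
    exact Module.Projective.of_split s q hqs
  have hCinj : Module.Injective Γ C := by
    constructor
    intro A B _ _ _ _ f hf g'
    obtain ⟨G, hG⟩ := hI₀inj.out f hf (s ∘ₗ g')
    refine ⟨q ∘ₗ G, fun x => ?_⟩
    have := hG x
    simp only [LinearMap.comp_apply] at this ⊢
    rw [this, ← LinearMap.comp_apply q s, hqs, LinearMap.id_apply]
  -- extend `g ∘ π : I₁ → J` along `h`
  obtain ⟨β, hβ⟩ := hJinj.out h hhinj (g ∘ₗ (LinearMap.range f₁).mkQ)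
  -- the key map `Φ : P₀ → J × C`
  let Φ : P₀ →ₗ[Γ] (J × C) := LinearMap.prod (β ∘ₗ f₀) (q ∘ₗ f₀)
  have hkerp : LinearMap.ker p = LinearMap.range i := LinearMap.exact_iff.mp hexact
  have hker : LinearMap.ker Φ = LinearMap.ker p := by
    rw [hkerp]
    ext x
    constructor
    · intro hx
      simp only [Φ, LinearMap.mem_ker, LinearMap.prod_apply, Prod.mk_eq_zero,
        LinearMap.comp_apply, Function.prod] at hx
      obtain ⟨hx1, hx2⟩ := hx
      have : f₀ x ∈ LinearMap.range h :=
        (Submodule.Quotient.mk_eq_zero _).mp hx2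
      obtain ⟨z, hz⟩ := this
      have hgz : g ((LinearMap.range f₁).mkQ z) = 0 := by
        have := hβ z
        rw [hz] at this
        simp only [LinearMap.comp_apply] at this
        rw [← this]; exact hx1
      have : (LinearMap.range f₁).mkQ z = 0 := by
        apply hginj
        simpa using hgz
      have : z ∈ LinearMap.range f₁ := by
        simpa [Submodule.Quotient.mk_eq_zero] using this
      obtain ⟨y, rfl⟩ := this
      have : f₀ (i y) = f₀ x := by
        have := hh y
        simp only [LinearMap.comp_apply] at this
        rw [← hz, this]
      exact ⟨y, hf₀inj this⟩
    · rintro ⟨y, rfl⟩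
      have hfi : f₀ (i y) = h (f₁ y) := by
        have := hh y
        simp only [LinearMap.comp_apply] at this
        rw [this]
      simp only [Φ, LinearMap.mem_ker, LinearMap.prod_apply, Prod.mk_eq_zero,
        LinearMap.comp_apply, Function.prod]
      constructor
      · rw [hfi, hβ (f₁ y)]
        have hz : ((LinearMap.range f₁).mkQ (f₁ y)) = 0 :=
          (Submodule.Quotient.mk_eq_zero _).mpr ⟨y, rfl⟩
        simp only [LinearMap.comp_apply, hz, map_zero]
      · rw [hfi]
        exact (Submodule.Quotient.mk_eq_zero _).mpr ⟨f₁ y, rfl⟩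
  -- descend `Φ` to `X` via `p`
  let e : (P₀ ⧸ LinearMap.ker p) ≃ₗ[Γ] X := p.quotKerEquivOfSurjective hp
  let Ψ : X →ₗ[Γ] (J × C) :=
    ((LinearMap.ker p).liftQ Φ hker.ge) ∘ₗ (e.symm : X →ₗ[Γ] (P₀ ⧸ LinearMap.ker p))
  have hΨinj : Function.Injective Ψ := by
    have h1 : Function.Injective ((LinearMap.ker p).liftQ Φ hker.ge) :=
      LinearMap.ker_eq_bot.mp (Submodule.ker_liftQ_eq_bot _ _ _ hker.le)
    simp only [Ψ, LinearMap.coe_comp, LinearEquiv.coe_coe]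
    exact h1.comp e.symm.injective
  have hTinj : Module.Injective Γ (J × C) := injective_prod_aux Γ J C hJinj hCinj
  have hTproj : Module.Projective Γ (J × C) := by
    have := hJproj
    infer_instance
  exact ⟨⟨ModuleCat.of Γ (J × C), Ψ, hTinj, hTproj, hΨinj⟩,
    ⟨ModuleCat.of Γ (J × C), Ψ, hTproj, hΨinj⟩⟩
end

section
/- Let Λ be a finite-dimensional k-algebra, E a Λ-module with Λ ∈ add(E), and Γ = End_Λ(E)^op. For Λ-modules M, N and a morphism (g₁, g₀) from the object (f_M : M₁ → M₀) to (f_N : N₁ → N₀) in the morphism category, if the induced map on cokernels coker(Hom(E,f_M)) → coker(Hom(E,f_N)) is zero, then (g₁,g₀) factors through an object that is a direct sum of an object of the form (id : M → M) and an object of the form (N → 0). -/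
/-- Let `Λ` be a basic representation-finite finite-dimensional algebra,
`E` its additive generator (in particular `Λ ∈ add E`), and `Γ = End_Λ(E)^op`. If a
morphism `(g₁, g₀) : (f_M : M₁ → M₀) → (f_N : N₁ → N₀)` of the morphism category induces
the zero map on cokernels `coker Hom(E, f_M) → coker Hom(E, f_N)` (equivalently, the
range of `g₀ ∘ -` on `Hom(E, M₀)` is contained in the range of `f_N ∘ -`), then
`(g₁, g₀)` factors through an object which is a direct sum of an object of the form
`(id : P → P)` and an object of the form `(Q → 0)`, i.e. through
`(fst : P × Q → P)`. -/
theorem stmt_15 (k : Type) [Field k] (Λ : Type) [Ring Λ] [Algebra k Λ]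
    [FiniteDimensional k Λ]
    (E : Type) [AddCommGroup E] [Module Λ E] [Module k E] [IsScalarTower k Λ E]
    [FiniteDimensional k E]
    -- `Λ ∈ add(E)`:
    (hΛE : ∃ (n : ℕ) (s : Λ →ₗ[Λ] (Fin n → E)) (r : (Fin n → E) →ₗ[Λ] Λ),
      r.comp s = LinearMap.id)
    -- `E` is an additive generator: every finitely generated `Λ`-module is in `add(E)`:
    (hE : ∀ (M : ModuleCat.{0} Λ), Module.Finite Λ M →
      ∃ (n : ℕ) (s : M →ₗ[Λ] (Fin n → E)) (r : (Fin n → E) →ₗ[Λ] M),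
        r.comp s = LinearMap.id)
    (M₁ M₀ N₁ N₀ : Type)
    [AddCommGroup M₁] [Module Λ M₁] [Module.Finite Λ M₁]
    [AddCommGroup M₀] [Module Λ M₀] [Module.Finite Λ M₀]
    [AddCommGroup N₁] [Module Λ N₁] [Module.Finite Λ N₁]
    [AddCommGroup N₀] [Module Λ N₀] [Module.Finite Λ N₀]
    (fM : M₁ →ₗ[Λ] M₀) (fN : N₁ →ₗ[Λ] N₀)
    (g₁ : M₁ →ₗ[Λ] N₁) (g₀ : M₀ →ₗ[Λ] N₀)
    (sq : fN.comp g₁ = g₀.comp fM)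
    -- the induced map on cokernels `coker Hom(E, f_M) → coker Hom(E, f_N)` is zero:
    (hzero : ∀ h : E →ₗ[Λ] M₀, ∃ h' : E →ₗ[Λ] N₁, g₀.comp h = fN.comp h') :
    ∃ (P Q : ModuleCat.{0} Λ) (a₁ : M₁ →ₗ[Λ] P × Q) (a₀ : M₀ →ₗ[Λ] P)
      (b₁ : (P × Q : Type) →ₗ[Λ] N₁) (b₀ : P →ₗ[Λ] N₀),
      (LinearMap.fst Λ P Q).comp a₁ = a₀.comp fM ∧
      fN.comp b₁ = b₀.comp (LinearMap.fst Λ P Q) ∧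
      b₁.comp a₁ = g₁ ∧ b₀.comp a₀ = g₀ := by

  -- Step 1: build h' : M₀ →ₗ[Λ] N₁ with fN ∘ h' = g₀, using M₀ ∈ add E and hzero.
  obtain ⟨n, s, r, hrs⟩ := hE (ModuleCat.of Λ M₀) ‹Module.Finite Λ M₀›
  choose h' hh' using hzero
  set H : (Fin n → E) →ₗ[Λ] N₁ :=
    ∑ i : Fin n, (h' (r.comp (LinearMap.single Λ (fun _ => E) i))).comp
      (LinearMap.proj i) with hH
  have hfNH : fN.comp H = g₀.comp r := by
    refine LinearMap.ext fun v => ?_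
    simp only [hH, LinearMap.comp_apply, LinearMap.coe_sum, Finset.sum_apply,
      map_sum]
    have : ∀ i : Fin n,
        fN ((h' (r.comp (LinearMap.single Λ (fun _ => E) i))) (v i)) =
        g₀ (r (LinearMap.single Λ (fun _ => E) i (v i))) := by
      intro i
      have := congrArg (fun φ => φ (v i)) (hh' (r.comp (LinearMap.single Λ (fun _ => E) i)))
      simpa [LinearMap.comp_apply] using this.symm
    simp only [LinearMap.proj_apply]
    rw [Finset.sum_congr rfl (fun i _ => this i)]
    have hv : (∑ i : Fin n, LinearMap.single Λ (fun _ => E) i (v i)) = v := by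
      ext j
      simp [Finset.sum_apply, Pi.single_apply]
    rw [← map_sum, ← map_sum r, hv]
  set ψ : M₀ →ₗ[Λ] N₁ := H.comp s with hψ
  have hfNψ : fN.comp ψ = g₀ := by
    rw [hψ, ← LinearMap.comp_assoc, hfNH, LinearMap.comp_assoc, hrs, LinearMap.comp_id]
  -- Step 2: the factorization through M₀ × ker fN.
  refine ⟨ModuleCat.of Λ M₀, ModuleCat.of Λ (LinearMap.ker fN), ?_, ?_, ?_, ?_, ?_, ?_, ?_, ?_⟩
  · -- a₁
    refine LinearMap.prod fM (LinearMap.codRestrict (LinearMap.ker fN) (g₁ - ψ.comp fM) ?_)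
    intro m
    have := congrArg (fun φ => φ m) sq
    have h2 := congrArg (fun φ => φ (fM m)) hfNψ
    simp only [LinearMap.comp_apply] at this h2
    simp [LinearMap.mem_ker, LinearMap.comp_apply, this, h2]
  · exact LinearMap.id
  · -- b₁
    exact ψ.comp (LinearMap.fst Λ M₀ (LinearMap.ker fN)) +
      (LinearMap.ker fN).subtype.comp (LinearMap.snd Λ M₀ (LinearMap.ker fN))
  · exact g₀
  · ext m <;> simp
  · refine LinearMap.ext fun pq => ?_
    obtain ⟨p, q⟩ := pq
    have h2 := congrArg (fun φ => φ p) hfNψ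
    simp only [LinearMap.comp_apply] at h2
    have hq : fN q.1 = 0 := q.2
    show fN (ψ p + q.1) = g₀ p
    rw [map_add, hq, add_zero]
    exact h2
  · refine LinearMap.ext fun m => ?_
    show ψ (fM m) + (g₁ m - ψ (fM m)) = g₁ m
    abel
  · ext m
    simp
end
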